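/- For an exterior space X, the collection 𝒢₀ of subsets W of the pushout X ∪_{L(X)} Ě(X) such that p₀⁻¹(W) is open in X, incl₀⁻¹(W) is open in Ě(X), and for each end a ∈ incl₀⁻¹(W) there exist E ∈ ε(X) and an open G ⊂ π₀(E) with a ∈ η₀⁻¹(G) ⊂ incl₀⁻¹(W) and q₀⁻¹(G) ⊂ p₀⁻¹(W), is a topology; moreover incl₀ : Ě(X) → incl₀(Ě(X)) is a homeomorphism onto its image with this topology. -/

import Mathlib

open Set Topology Filter

universe u v

/-- An externology on a topological space: a nonempty family of open subsets closed under
finite intersections and under open supersets. -/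
structure Externology (X : Type u) [TopologicalSpace X] where
  sets : Set (Set X)
  nonempty' : sets.Nonempty
  isOpen' : ∀ E ∈ sets, IsOpen E
  inter' : ∀ E ∈ sets, ∀ F ∈ sets, E ∩ F ∈ sets
  superset' : ∀ E ∈ sets, ∀ U : Set X, IsOpen U → E ⊆ U → U ∈ sets

variable {X : Type u} {Y : Type v} [TopologicalSpace X] [TopologicalSpace Y]

/-- The limit space `L(X)` of an exterior space: the intersection of all exterior open sets. -/
def Elimit (ε : Externology X) : Set X := ⋂₀ ε.sets

/-- `V` is a `q₀`-saturated open subset of `E`: an open subset of `E` which is a union of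
path-components of `E`. -/
def IsQSatOpen (E V : Set X) : Prop :=
  V ⊆ E ∧ IsOpen V ∧ ∀ x ∈ V, pathComponentIn E x ⊆ V

/-- An end point of an exterior space: a compatible choice of a path-component of each
exterior open subset. -/
structure EndPt (ε : Externology X) where
  comp : Set X → Set X
  isComp' : ∀ E ∈ ε.sets, ∃ x ∈ E, comp E = pathComponentIn E x
  mono' : ∀ E ∈ ε.sets, ∀ F ∈ ε.sets, E ⊆ F → comp E ⊆ comp F

/-- The inverse limit topology on the end space. -/
instance EndPt.instTopologicalSpace (ε : Externology X) : TopologicalSpace (EndPt ε) :=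
  .generateFrom {S | ∃ E ∈ ε.sets, ∃ V : Set X, IsQSatOpen E V ∧
    S = {a : EndPt ε | a.comp E ⊆ V}}

/-- The canonical map `e₀ : L(X) → Ě(X)` sending a point of the limit space to the family
of its path-components. -/
def endOf (ε : Externology X) (x : Elimit ε) : EndPt ε where
  comp E := pathComponentIn E (x : X)
  isComp' E hE := ⟨(x : X), x.2 E hE, rfl⟩
  mono' _E _hE _F _hF h := pathComponentIn_mono h

/-- The gluing relation of the push-out `X ∪_{L(X)} Ě(X)`. -/
inductive CompletionRel (ε : Externology X) : X ⊕ EndPt ε → X ⊕ EndPt ε → Prop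
  | glue (x : Elimit ε) : CompletionRel ε (Sum.inl (x : X)) (Sum.inr (endOf ε x))

/-- The underlying set of the completion: the push-out `X ∪_{L(X)} Ě(X)`. -/
def CompletionPts (ε : Externology X) : Type u := Quot (CompletionRel ε)

/-- The canonical map `p₀ : X → X ∪_{L(X)} Ě(X)`. -/
def p0 (ε : Externology X) : X → CompletionPts ε := fun x => Quot.mk _ (Sum.inl x)

/-- The canonical map `incl₀ : Ě(X) → X ∪_{L(X)} Ě(X)`. -/
def incl0 (ε : Externology X) : EndPt ε → CompletionPts ε := fun a => Quot.mk _ (Sum.inr a)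

/-- The family `𝒢₀` of subsets of the push-out `X ∪_{L(X)} Ě(X)`: `W ∈ 𝒢₀` iff `p₀⁻¹ W` is
open in `X`, `incl₀⁻¹ W` is open in `Ě(X)`, and each end `a ∈ incl₀⁻¹ W` admits `E ∈ ε(X)`
and an open `G ⊆ π₀(E)` (encoded by the saturated open set `V = q₀⁻¹ G ⊆ E`) with
`a ∈ η₀⁻¹ G ⊆ incl₀⁻¹ W` and `q₀⁻¹ G ⊆ p₀⁻¹ W`. -/
def G0 (ε : Externology X) : Set (Set (CompletionPts ε)) :=
  {W | IsOpen (p0 ε ⁻¹' W) ∧ IsOpen {a : EndPt ε | incl0 ε a ∈ W} ∧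
    ∀ a : EndPt ε, incl0 ε a ∈ W →
      ∃ E ∈ ε.sets, ∃ V : Set X, IsQSatOpen E V ∧ a.comp E ⊆ V ∧
        (∀ b : EndPt ε, b.comp E ⊆ V → incl0 ε b ∈ W) ∧ ∀ x ∈ V, p0 ε x ∈ W}

/-- The topology `𝒢₀` on the completion. -/
instance CompletionPts.instTopologicalSpace (ε : Externology X) :
    TopologicalSpace (CompletionPts ε) := .generateFrom (G0 ε)

/-- The basic exterior subset `W₀(E) = p₀(E) ∪ incl₀(Ě(X))` of the completion. -/
def W0 (ε : Externology X) (E : Set X) : Set (CompletionPts ε) :=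
  p0 ε '' E ∪ Set.range (incl0 ε)

lemma W0_mono (ε : Externology X) {E F : Set X} (h : E ⊆ F) : W0 ε E ⊆ W0 ε F :=
  union_subset_union_left _ (image_mono h)

/-- The externology of the completion `Č₀(X)`, with base `{W₀(E) | E ∈ ε(X)}`. -/
def completionExternology (ε : Externology X) : Externology (CompletionPts ε) where
  sets := {U | IsOpen U ∧ ∃ E ∈ ε.sets, W0 ε E ⊆ U}
  nonempty' := by
    obtain ⟨E, hE⟩ := ε.nonempty'
    exact ⟨univ, isOpen_univ, E, hE, subset_univ _⟩
  isOpen' := fun U hU => hU.1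
  inter' := by
    rintro U ⟨hUo, E, hE, hEU⟩ V ⟨hVo, F, hF, hFV⟩
    refine ⟨hUo.inter hVo, E ∩ F, ε.inter' E hE F hF, ?_⟩
    exact subset_inter ((W0_mono ε inter_subset_left).trans hEU)
      ((W0_mono ε inter_subset_right).trans hFV)
  superset' := by
    rintro U ⟨hUo, E, hE, hEU⟩ V hVo hUV
    exact ⟨hVo, E, hE, hEU.trans hUV⟩

/-- An exterior map between exterior spaces. -/
def IsExteriorMap (εX : Externology X) (εY : Externology Y) (f : X → Y) : Prop :=
  Continuous f ∧ ∀ E ∈ εY.sets, f ⁻¹' E ∈ εX.sets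

/-- An isomorphism of exterior spaces. -/
def IsExteriorIso (εX : Externology X) (εY : Externology Y) (f : X → Y) : Prop :=
  IsExteriorMap εX εY f ∧ ∃ g : Y → X, IsExteriorMap εY εX g ∧ g ∘ f = id ∧ f ∘ g = id

/-- An exterior space is `Č₀`-complete if the canonical map `p₀ : X → Č₀(X)` is an
isomorphism of exterior spaces. -/
def C0Complete (ε : Externology X) : Prop :=
  IsExteriorIso ε (completionExternology ε) (p0 ε)

/-- A `π₀`-`ε(X)`-net: a net eventually contained in a single path-component of every
exterior open set. -/
def IsPi0Net {D : Type*} [Preorder D] (ε : Externology X) (u : D → X) : Prop :=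
  ∀ E ∈ ε.sets, ∃ C : Set X, (∃ y ∈ E, C = pathComponentIn E y) ∧ ∀ᶠ δ in atTop, u δ ∈ C

/-- The `r`-exterior externology of a flow: open sets absorbing every positive
semi-trajectory. -/
def rExt (φ : Flow ℝ X) : Externology X where
  sets := {N | IsOpen N ∧ ∀ x : X, ∃ r₀ : ℝ, ∀ t : ℝ, r₀ < t → φ t x ∈ N}
  nonempty' := ⟨univ, isOpen_univ, fun _ => ⟨0, fun _ _ => mem_univ _⟩⟩
  isOpen' := fun _ hN => hN.1
  inter' := by
    rintro N ⟨hNo, hN⟩ M ⟨hMo, hM⟩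
    refine ⟨hNo.inter hMo, fun x => ?_⟩
    obtain ⟨r, hr⟩ := hN x
    obtain ⟨s, hs⟩ := hM x
    exact ⟨max r s, fun t ht =>
      ⟨hr t ((le_max_left r s).trans_lt ht), hs t ((le_max_right r s).trans_lt ht)⟩⟩
  superset' := by
    rintro N ⟨_, hN⟩ U hUo hNU
    exact ⟨hUo, fun x => (hN x).imp fun r h t ht => hNU (h t ht)⟩

/-- The `ω^r`-limit set of a point for a flow. -/
def omegaR (φ : Flow ℝ X) (x : X) : Set X :=
  ⋂ t : ℝ, closure ((fun s : ℝ => φ s x) '' Ici t)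

/-- The set of critical (rest) points of a flow. -/
def criticalSet (φ : Flow ℝ X) : Set X := {x | ∀ r : ℝ, φ r x = x}

/-- The set of periodic points of a flow. -/
def periodicSet (φ : Flow ℝ X) : Set X := {x | ∃ r : ℝ, r ≠ 0 ∧ φ r x = x}

/-- The global `Ω^r`-limit of a flow. -/
def OmegaRSet (φ : Flow ℝ X) : Set X := ⋃ x : X, omegaR φ x

/-- The compatibility conditions making an exterior space with a flow an `r`-exterior flow:
`φ : ℝ^r ×̄ M_d → M` is exterior and each `F_t : M ×̄ I → M`, `F_t(x,s) = φ(ts, x)`,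
is exterior. -/
structure IsRExteriorFlow (ε : Externology X) (φ : Flow ℝ X) : Prop where
  absorb : ∀ E ∈ ε.sets, ∀ x : X, ∃ r₀ : ℝ, ∀ t : ℝ, r₀ < t → φ t x ∈ E
  homotopyExt : ∀ t : ℝ, ∀ E ∈ ε.sets, ∃ G ∈ ε.sets, ∀ x ∈ G, ∀ s ∈ Icc (0:ℝ) 1,
    φ (t * s) x ∈ E

section Aux

open Classical in
/-- A normal form for elements of `X ⊕ EndPt ε`: points of the limit space are pushed to
their ends. -/
noncomputable def normS (ε : Externology X) : X ⊕ EndPt ε → X ⊕ EndPt ε := fun s =>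
  match s with
  | .inl x => if h : x ∈ Elimit ε then .inr (endOf ε ⟨x, h⟩) else .inl x
  | .inr a => .inr a

lemma normS_rel (ε : Externology X) : ∀ s t, CompletionRel ε s t → normS ε s = normS ε t := by
  rintro _ _ ⟨x⟩
  simp only [normS, dif_pos x.2]

/-- Normal form lifted to the completion. -/
noncomputable def normQ (ε : Externology X) : CompletionPts ε → X ⊕ EndPt ε :=
  Quot.lift (normS ε) (normS_rel ε)

lemma incl0_injective (ε : Externology X) : Function.Injective (incl0 ε) := by
  intro a b h
  have := congrArg (normQ ε) h
  simpa only [normQ, incl0, normS, Sum.inr.injEq] using this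

lemma comp_subset_of_comp_subset (ε : Externology X) (a : EndPt ε)
    {E F V : Set X} (hE : E ∈ ε.sets) (hF : F ∈ ε.sets) (hEF : E ⊆ F)
    (hV : IsQSatOpen F V) (h : a.comp E ⊆ V) : a.comp F ⊆ V := by
  obtain ⟨x, hxE, hcomp⟩ := a.isComp' E hE
  have hxa : x ∈ a.comp E := hcomp ▸ mem_pathComponentIn_self hxE
  have hxV : x ∈ V := h hxa
  have hxF : x ∈ a.comp F := a.mono' E hE F hF hEF hxa
  obtain ⟨y, _, hcompF⟩ := a.isComp' F hF
  have : pathComponentIn F x = pathComponentIn F y :=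
    pathComponentIn_congr (hcompF ▸ hxF)
  rw [hcompF, ← this]
  exact hV.2.2 x hxV

lemma g0_univ (ε : Externology X) : univ ∈ G0 ε := by
  refine ⟨isOpen_univ, isOpen_univ, fun a _ => ?_⟩
  obtain ⟨E, hE⟩ := ε.nonempty'
  refine ⟨E, hE, E, ⟨subset_rfl, ε.isOpen' E hE, fun _ _ => pathComponentIn_subset⟩, ?_,
    fun _ _ => mem_univ _, fun _ _ => mem_univ _⟩
  obtain ⟨x, _, hcomp⟩ := a.isComp' E hE
  exact hcomp ▸ pathComponentIn_subset

lemma g0_inter (ε : Externology X) {W₁ W₂ : Set (CompletionPts ε)}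
    (h₁ : W₁ ∈ G0 ε) (h₂ : W₂ ∈ G0 ε) : W₁ ∩ W₂ ∈ G0 ε := by
  refine ⟨h₁.1.inter h₂.1, h₁.2.1.inter h₂.2.1, fun a ⟨ha₁, ha₂⟩ => ?_⟩
  obtain ⟨E₁, hE₁, V₁, hV₁, haV₁, hb₁, hp₁⟩ := h₁.2.2 a ha₁
  obtain ⟨E₂, hE₂, V₂, hV₂, haV₂, hb₂, hp₂⟩ := h₂.2.2 a ha₂
  have hE : E₁ ∩ E₂ ∈ ε.sets := ε.inter' E₁ hE₁ E₂ hE₂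
  set V : Set X := V₁ ∩ V₂ ∩ (E₁ ∩ E₂) with hVdef
  have hVsat : IsQSatOpen (E₁ ∩ E₂) V := by
    refine ⟨inter_subset_right, ((hV₁.2.1.inter hV₂.2.1).inter
      ((ε.isOpen' E₁ hE₁).inter (ε.isOpen' E₂ hE₂))), fun x hx => ?_⟩
    have h1 : pathComponentIn (E₁ ∩ E₂) x ⊆ V₁ :=
      (pathComponentIn_mono inter_subset_left).trans (hV₁.2.2 x hx.1.1)
    have h2 : pathComponentIn (E₁ ∩ E₂) x ⊆ V₂ :=
      (pathComponentIn_mono inter_subset_right).trans (hV₂.2.2 x hx.1.2)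
    exact subset_inter (subset_inter h1 h2) pathComponentIn_subset
  have haV : a.comp (E₁ ∩ E₂) ⊆ V := by
    have hsub : a.comp (E₁ ∩ E₂) ⊆ E₁ ∩ E₂ := by
      obtain ⟨x, _, hcomp⟩ := a.isComp' _ hE
      exact hcomp ▸ pathComponentIn_subset
    exact subset_inter (subset_inter
      ((a.mono' _ hE E₁ hE₁ inter_subset_left).trans haV₁)
      ((a.mono' _ hE E₂ hE₂ inter_subset_right).trans haV₂)) hsub
  refine ⟨E₁ ∩ E₂, hE, V, hVsat, haV, fun b hbV => ?_, fun x hxV => ⟨hp₁ x hxV.1.1, hp₂ x hxV.1.2⟩⟩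
  refine ⟨hb₁ b ?_, hb₂ b ?_⟩
  · exact comp_subset_of_comp_subset ε b hE hE₁ inter_subset_left hV₁
      (hbV.trans (inter_subset_left.trans inter_subset_left))
  · exact comp_subset_of_comp_subset ε b hE hE₂ inter_subset_right hV₂
      (hbV.trans (inter_subset_left.trans inter_subset_right))

lemma g0_sUnion (ε : Externology X) {S : Set (Set (CompletionPts ε))}
    (hS : ∀ W ∈ S, W ∈ G0 ε) : ⋃₀ S ∈ G0 ε := by
  refine ⟨?_, ?_, ?_⟩
  · rw [preimage_sUnion]
    exact isOpen_biUnion fun W hW => (hS W hW).1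
  · have : {a : EndPt ε | incl0 ε a ∈ ⋃₀ S} = ⋃ W ∈ S, {a | incl0 ε a ∈ W} := by
      ext a; simp [mem_sUnion]
    rw [this]
    exact isOpen_biUnion fun W hW => (hS W hW).2.1
  · rintro a ⟨W, hWS, haW⟩
    obtain ⟨E, hE, V, hV, haV, hb, hp⟩ := (hS W hWS).2.2 a haW
    exact ⟨E, hE, V, hV, haV, fun b hbV => ⟨W, hWS, hb b hbV⟩, fun x hx => ⟨W, hWS, hp x hx⟩⟩

/-- For every basic open set of the end space there is a `𝒢₀`-set restricting to it. -/
lemma key_lemma (ε : Externology X) {E V : Set X} (hE : E ∈ ε.sets) (hV : IsQSatOpen E V) :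
    ∃ W ∈ G0 ε, incl0 ε ⁻¹' W = {a : EndPt ε | a.comp E ⊆ V} := by
  classical
  set S : Set (EndPt ε) := {a : EndPt ε | a.comp E ⊆ V} with hSdef
  set W : Set (CompletionPts ε) := (p0 ε '' V) ∪ (incl0 ε '' S) with hWdef
  have hLE : Elimit ε ⊆ E := fun x hx => hx E hE
  -- incl₀⁻¹ W = S
  have hinclW : incl0 ε ⁻¹' W = S := by
    ext a
    constructor
    · rintro (⟨y, hyV, hya⟩ | ⟨b, hbS, hba⟩)
      · -- incl0 a = p0 y with y ∈ V
        have := congrArg (normQ ε) hya.symm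
        simp only [normQ, p0, incl0, normS] at this
        by_cases hy : y ∈ Elimit ε
        · rw [dif_pos hy] at this
          have ha : a = endOf ε ⟨y, hy⟩ := Sum.inr_injective this
          have : a.comp E = pathComponentIn E y := by rw [ha]; rfl
          rw [hSdef, mem_setOf_eq, this]
          exact hV.2.2 y hyV
        · rw [dif_neg hy] at this
          exact absurd this (by simp)
      · exact (incl0_injective ε hba) ▸ hbS
    · intro haS
      exact Or.inr ⟨a, haS, rfl⟩
  -- p₀⁻¹ W = V
  have hp0W : p0 ε ⁻¹' W = V := by
    ext x
    constructor
    · rintro (⟨y, hyV, hyx⟩ | ⟨b, hbS, hbx⟩)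
      · have := congrArg (normQ ε) hyx
        simp only [normQ, p0, normS] at this
        by_cases hy : y ∈ Elimit ε
        · rw [dif_pos hy] at this
          by_cases hx : x ∈ Elimit ε
          · rw [dif_pos hx] at this
            have hee : endOf ε ⟨y, hy⟩ = endOf ε ⟨x, hx⟩ := by
              simpa using this
            have hxy : pathComponentIn E y = pathComponentIn E x :=
              congrFun (congrArg EndPt.comp hee) E
            have hxmem : x ∈ pathComponentIn E x := mem_pathComponentIn_self (hLE hx)
            exact hV.2.2 y hyV (hxy ▸ hxmem)
          · rw [dif_neg hx] at this
            exact absurd this (by simp)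
        · rw [dif_neg hy] at this
          by_cases hx : x ∈ Elimit ε
          · rw [dif_pos hx] at this; exact absurd this (by simp)
          · rw [dif_neg hx] at this
            have : y = x := by simpa using this
            exact this ▸ hyV
      · have := congrArg (normQ ε) hbx
        simp only [normQ, p0, incl0, normS] at this
        by_cases hx : x ∈ Elimit ε
        · rw [dif_pos hx] at this
          have hb : b = endOf ε ⟨x, hx⟩ := by simpa using this
          have hcomp : b.comp E = pathComponentIn E x := by rw [hb]; rfl
          have hxb : x ∈ b.comp E := hcomp ▸ mem_pathComponentIn_self (hLE hx)
          exact hbS hxb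
        · rw [dif_neg hx] at this
          exact absurd this (by simp)
    · intro hxV
      exact Or.inl ⟨x, hxV, rfl⟩
  have hSopen : IsOpen S := by
    exact TopologicalSpace.GenerateOpen.basic _ ⟨E, hE, V, hV, rfl⟩
  refine ⟨W, ⟨hp0W ▸ hV.2.1, ?_, ?_⟩, hinclW⟩
  · have : {a : EndPt ε | incl0 ε a ∈ W} = S := hinclW
    rw [this]; exact hSopen
  · intro a haW
    have haS : a ∈ S := hinclW ▸ haW
    exact ⟨E, hE, V, hV, haS, fun b hbV => Or.inr ⟨b, hbV, rfl⟩,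
      fun x hxV => Or.inl ⟨x, hxV, rfl⟩⟩

end Aux

/-- the family `𝒢₀` is a topology on the push-out `X ∪_{L(X)} Ě(X)` (i.e. the
open sets of the topology it generates are exactly the members of `𝒢₀`), and with it
`incl₀ : Ě(X) → X ∪_{L(X)} Ě(X)` is a homeomorphism onto its image. -/
theorem stmt_5 (ε : Externology X) :
    (∀ W : Set (CompletionPts ε), IsOpen W ↔ W ∈ G0 ε) ∧ IsEmbedding (incl0 ε) := by
  have h1 : ∀ W : Set (CompletionPts ε), IsOpen W ↔ W ∈ G0 ε := by
    intro W
    constructor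
    · intro h
      have h' : TopologicalSpace.GenerateOpen (G0 ε) W := h
      clear h
      induction h' with
      | basic _ hs => exact hs
      | univ => exact g0_univ ε
      | inter _ _ _ _ ih₁ ih₂ => exact g0_inter ε ih₁ ih₂
      | sUnion S _ ih => exact g0_sUnion ε ih
    · intro h
      exact TopologicalSpace.GenerateOpen.basic _ h
  refine ⟨h1, ?_, incl0_injective ε⟩
  constructor
  refine le_antisymm ?_ ?_
  · -- generateFrom basic ≤ induced : induced-opens are open in the end space
    intro s hs
    obtain ⟨W, hW, rfl⟩ := isOpen_induced_iff.mp hs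
    exact ((h1 W).mp hW).2.1
  · -- induced ≤ generateFrom basic
    apply le_generateFrom
    rintro s ⟨E, hE, V, hV, rfl⟩
    obtain ⟨W, hW, hWeq⟩ := key_lemma ε hE hV
    exact isOpen_induced_iff.mpr ⟨W, (h1 W).mpr hW, hWeq⟩
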